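/- Let F be a cumulative distribution function on ℝ and let K be a cumulative distribution function supported on the nonnegative half-line such that, for some positive number M, K̄(t) ≤ M·F̄(t) for all t. Then for every interval with endpoints a ≤ b and every nonnegative continuous nondecreasing function f on [a,b], ∫_{(a,b]} f dK ≤ M·( ∫_{(a,b]} f dF + f(b)·F̄(b) ), where the integrals are Lebesgue–Stieltjes integrals. In particular (letting b → ∞), if F is also supported on the nonnegative half-line, then the moments satisfy μ_{K,i} ≤ M·μ_{F,i} for every positive integer i for which μ_{F,i} = ∫ x^i dF(x) is finite. -/

import Mathlib

open MeasureTheory Filter Set Topology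

noncomputable section

/-- Pointwise ENNReal version of the tail bound. -/
lemma tail_ennreal (μF μK : Measure ℝ) [IsProbabilityMeasure μF] [IsProbabilityMeasure μK]
    (M : ℝ) (hM : 0 < M)
    (htail : ∀ t : ℝ, (μK (Set.Ioi t)).toReal ≤ M * (μF (Set.Ioi t)).toReal) :
    ∀ t : ℝ, μK (Set.Ioi t) ≤ ENNReal.ofReal M * μF (Set.Ioi t) := by
  intro t
  have hK : μK (Set.Ioi t) ≠ ⊤ := measure_ne_top _ _
  have hF : μF (Set.Ioi t) ≠ ⊤ := measure_ne_top _ _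
  calc μK (Set.Ioi t) = ENNReal.ofReal (μK (Set.Ioi t)).toReal := by
        rw [ENNReal.ofReal_toReal hK]
    _ ≤ ENNReal.ofReal (M * (μF (Set.Ioi t)).toReal) := ENNReal.ofReal_le_ofReal (htail t)
    _ = ENNReal.ofReal M * ENNReal.ofReal (μF (Set.Ioi t)).toReal := by
        rw [ENNReal.ofReal_mul hM.le]
    _ = ENNReal.ofReal M * μF (Set.Ioi t) := by rw [ENNReal.ofReal_toReal hF]

/-- Closed tail bound, obtained as a limit of the open tail bounds. -/
lemma tail_closed (μF μK : Measure ℝ) [IsProbabilityMeasure μF] [IsProbabilityMeasure μK]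
    (M : ℝ) (hM : 0 < M)
    (htail : ∀ t : ℝ, (μK (Set.Ioi t)).toReal ≤ M * (μF (Set.Ioi t)).toReal) :
    ∀ s : ℝ, μK (Set.Ici s) ≤ ENNReal.ofReal M * μF (Set.Ici s) := by
  intro s
  have hInter : ∀ (μ : Measure ℝ) [IsFiniteMeasure μ],
      Tendsto (fun n : ℕ => μ (Set.Ioi (s - 1 / (n + 1)))) atTop (𝓝 (μ (Set.Ici s))) := by
    intro μ _
    have hset : ⋂ n : ℕ, Set.Ioi (s - 1 / (n + 1)) = Set.Ici s := by
      ext x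
      simp only [Set.mem_iInter, Set.mem_Ioi, Set.mem_Ici]
      constructor
      · intro h
        by_contra hx
        push_neg at hx
        obtain ⟨n, hn⟩ := exists_nat_one_div_lt (sub_pos.2 hx)
        have := h n
        linarith
      · intro h n
        have : (0:ℝ) < 1 / (n + 1) := by positivity
        linarith
    have := tendsto_measure_iInter_atTop (μ := μ)
      (s := fun n : ℕ => Set.Ioi (s - 1 / (n + 1)))
      (fun n => measurableSet_Ioi.nullMeasurableSet)
      (fun n m hnm => by
        apply Set.Ioi_subset_Ioi
        have h1 : (0:ℝ) < (n:ℝ) + 1 := by positivity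
        have h2 : (n:ℝ) + 1 ≤ (m:ℝ) + 1 := by
          have : (n:ℝ) ≤ (m:ℝ) := Nat.cast_le.2 hnm
          linarith
        have : 1 / ((m:ℝ) + 1) ≤ 1 / ((n:ℝ) + 1) := one_div_le_one_div_of_le h1 h2
        linarith)
      ⟨0, measure_ne_top _ _⟩
    rwa [hset] at this
  have hK := hInter μK
  have hF := ENNReal.Tendsto.const_mul (hInter μF) (Or.inr (ENNReal.ofReal_ne_top (r := M)))
  refine le_of_tendsto_of_tendsto' hK hF fun n => ?_
  exact tail_ennreal μF μK M hM htail _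

theorem stmt_10 (μF μK : Measure ℝ) [IsProbabilityMeasure μF] [IsProbabilityMeasure μK]
    (hsuppK : μK (Set.Iio 0) = 0)
    (M : ℝ) (hM : 0 < M)
    (htail : ∀ t : ℝ, (μK (Set.Ioi t)).toReal ≤ M * (μF (Set.Ioi t)).toReal) :
    (∀ a b : ℝ, a ≤ b → ∀ f : ℝ → ℝ,
      (∀ x ∈ Set.Icc a b, 0 ≤ f x) → ContinuousOn f (Set.Icc a b) →
        MonotoneOn f (Set.Icc a b) →
      (∫ x in Set.Ioc a b, f x ∂μK)
        ≤ M * ((∫ x in Set.Ioc a b, f x ∂μF) + f b * (μF (Set.Ioi b)).toReal)) ∧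
    (μF (Set.Iio 0) = 0 → ∀ i : ℕ, 0 < i →
      (∫⁻ x, ENNReal.ofReal (x ^ i) ∂μF) < ⊤ →
      (∫⁻ x, ENNReal.ofReal (x ^ i) ∂μK)
        ≤ ENNReal.ofReal M * ∫⁻ x, ENNReal.ofReal (x ^ i) ∂μF) := by
  have htail' := tail_ennreal μF μK M hM htail
  have htailc := tail_closed μF μK M hM htail
  constructor
  · -- Part 1
    intro a b hab f hnn hcont hmono
    have hbmem : b ∈ Set.Icc a b := ⟨hab, le_refl b⟩
    have hfb : 0 ≤ f b := hnn b hbmem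
    -- key pointwise bound
    have key : ∀ t ∈ Set.Ioi (0:ℝ),
        μK ({x | t < f x} ∩ Set.Ioc a b)
          ≤ ENNReal.ofReal M * μF ({x | t < f x} ∩ Set.Ioc a b)
            + (Set.Ioo 0 (f b)).indicator
                (fun _ => ENNReal.ofReal M * μF (Set.Ioi b)) t := by
      intro t ht
      set S : Set ℝ := {x | t < f x} ∩ Set.Ioc a b with hS
      rcases eq_empty_or_nonempty S with hSe | hSne
      · simp [hSe]
      · obtain ⟨x₀, hx₀⟩ := hSne
        have hx₀m : x₀ ∈ Set.Icc a b := ⟨hx₀.2.1.le, hx₀.2.2⟩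
        have htfb : t < f b := lt_of_lt_of_le hx₀.1 (hmono hx₀m hbmem hx₀.2.2)
        have hbS : b ∈ S := ⟨htfb, lt_of_lt_of_le hx₀.2.1 hx₀.2.2, le_refl b⟩
        have hbdd : BddBelow S := ⟨a, fun x hx => hx.2.1.le⟩
        set s := sInf S with hsdef
        have hsa : a ≤ s := le_csInf ⟨x₀, hx₀⟩ (fun x hx => hx.2.1.le)
        have hsb : s ≤ b := csInf_le hbdd hbS
        -- Ioi s ⊆ S ∪ Ioi b
        have hIoi : Set.Ioi s ⊆ S ∪ Set.Ioi b := by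
          intro x hx
          rcases le_or_gt x b with hxb | hxb
          · left
            obtain ⟨y, hyS, hys⟩ := exists_lt_of_csInf_lt ⟨x₀, hx₀⟩ hx
            have hxab : x ∈ Set.Ioc a b := ⟨lt_of_le_of_lt hsa hx, hxb⟩
            have hym : y ∈ Set.Icc a b := ⟨hyS.2.1.le, hyS.2.2⟩
            exact ⟨lt_of_lt_of_le hyS.1 (hmono hym ⟨hxab.1.le, hxb⟩ hys.le), hxab⟩
          · right; exact hxb
        have hmain : μK S ≤ ENNReal.ofReal M * μF (S ∪ Set.Ioi b) := by
          by_cases hsS : s ∈ S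
          · have hSsub : S ⊆ Set.Ici s := fun x hx => csInf_le hbdd hx
            have hIci : Set.Ici s ⊆ S ∪ Set.Ioi b := by
              intro x hx
              rcases eq_or_lt_of_le (Set.mem_Ici.1 hx) with h | h
              · left; rw [← h]; exact hsS
              · exact hIoi h
            calc μK S ≤ μK (Set.Ici s) := measure_mono hSsub
              _ ≤ ENNReal.ofReal M * μF (Set.Ici s) := htailc s
              _ ≤ ENNReal.ofReal M * μF (S ∪ Set.Ioi b) :=
                  mul_le_mul_right (measure_mono hIci) _
          · have hSsub : S ⊆ Set.Ioi s := by
              intro x hx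
              rcases eq_or_lt_of_le (csInf_le hbdd hx) with h | h
              · exact absurd (by rw [hsdef, h]; exact hx) hsS
              · exact h
            calc μK S ≤ μK (Set.Ioi s) := measure_mono hSsub
              _ ≤ ENNReal.ofReal M * μF (Set.Ioi s) := htail' s
              _ ≤ ENNReal.ofReal M * μF (S ∪ Set.Ioi b) :=
                  mul_le_mul_right (measure_mono hIoi) _
        have hind : (Set.Ioo 0 (f b)).indicator
            (fun _ => ENNReal.ofReal M * μF (Set.Ioi b)) t
            = ENNReal.ofReal M * μF (Set.Ioi b) := by
          rw [Set.indicator_of_mem (Set.mem_Ioo.2 ⟨ht, htfb⟩)]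
        calc μK S ≤ ENNReal.ofReal M * μF (S ∪ Set.Ioi b) := hmain
          _ ≤ ENNReal.ofReal M * (μF S + μF (Set.Ioi b)) :=
              mul_le_mul_right (measure_union_le _ _) _
          _ = ENNReal.ofReal M * μF S + ENNReal.ofReal M * μF (Set.Ioi b) := by
              rw [mul_add]
          _ = _ := by rw [hind]
    -- measurability and nonnegativity for layer cake
    have hmesK : AEMeasurable f (μK.restrict (Set.Ioc a b)) :=
      (hcont.mono Set.Ioc_subset_Icc_self).aemeasurable measurableSet_Ioc
    have hmesF : AEMeasurable f (μF.restrict (Set.Ioc a b)) :=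
      (hcont.mono Set.Ioc_subset_Icc_self).aemeasurable measurableSet_Ioc
    have hnnK : 0 ≤ᵐ[μK.restrict (Set.Ioc a b)] f := by
      rw [EventuallyLE, ae_restrict_iff' measurableSet_Ioc]
      exact ae_of_all _ fun x hx => hnn x (Set.Ioc_subset_Icc_self hx)
    have hnnF : 0 ≤ᵐ[μF.restrict (Set.Ioc a b)] f := by
      rw [EventuallyLE, ae_restrict_iff' measurableSet_Ioc]
      exact ae_of_all _ fun x hx => hnn x (Set.Ioc_subset_Icc_self hx)
    have hlcK := lintegral_eq_lintegral_meas_lt (μK.restrict (Set.Ioc a b)) hnnK hmesK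
    have hlcF := lintegral_eq_lintegral_meas_lt (μF.restrict (Set.Ioc a b)) hnnF hmesF
    have hresK : ∀ t : ℝ, (μK.restrict (Set.Ioc a b)) {x | t < f x}
        = μK ({x | t < f x} ∩ Set.Ioc a b) := fun t =>
      Measure.restrict_apply' measurableSet_Ioc
    have hresF : ∀ t : ℝ, (μF.restrict (Set.Ioc a b)) {x | t < f x}
        = μF ({x | t < f x} ∩ Set.Ioc a b) := fun t =>
      Measure.restrict_apply' measurableSet_Ioc
    -- the main lintegral inequality
    have hmainL : ∫⁻ x, ENNReal.ofReal (f x) ∂(μK.restrict (Set.Ioc a b))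
        ≤ ENNReal.ofReal M * (∫⁻ x, ENNReal.ofReal (f x) ∂(μF.restrict (Set.Ioc a b)))
          + ENNReal.ofReal M * μF (Set.Ioi b) * ENNReal.ofReal (f b) := by
      rw [hlcK, hlcF]
      calc ∫⁻ t in Set.Ioi 0, (μK.restrict (Set.Ioc a b)) {x | t < f x}
          ≤ ∫⁻ t in Set.Ioi 0,
              (ENNReal.ofReal M * (μF.restrict (Set.Ioc a b)) {x | t < f x}
                + (Set.Ioo 0 (f b)).indicator
                    (fun _ => ENNReal.ofReal M * μF (Set.Ioi b)) t) := by
            apply lintegral_mono_ae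
            rw [ae_restrict_iff' measurableSet_Ioi]
            refine ae_of_all _ fun t ht => ?_
            rw [hresK, hresF]
            exact key t ht
        _ = (∫⁻ t in Set.Ioi 0,
              ENNReal.ofReal M * (μF.restrict (Set.Ioc a b)) {x | t < f x})
            + ∫⁻ t in Set.Ioi 0, (Set.Ioo 0 (f b)).indicator
                (fun _ => ENNReal.ofReal M * μF (Set.Ioi b)) t := by
            apply lintegral_add_right
            exact (measurable_const.indicator measurableSet_Ioo)
        _ = ENNReal.ofReal M * (∫⁻ t in Set.Ioi 0,
              (μF.restrict (Set.Ioc a b)) {x | t < f x})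
            + ENNReal.ofReal M * μF (Set.Ioi b) * ENNReal.ofReal (f b) := by
            congr 1
            · exact lintegral_const_mul' _ _ ENNReal.ofReal_ne_top
            · rw [lintegral_indicator measurableSet_Ioo, setLIntegral_const]
              rw [Measure.restrict_apply measurableSet_Ioo]
              have : Set.Ioo 0 (f b) ∩ Set.Ioi 0 = Set.Ioo 0 (f b) := by
                apply Set.inter_eq_self_of_subset_left
                intro x hx; exact hx.1
              rw [this, Real.volume_Ioo, sub_zero]
    -- finiteness
    have hfinF : ∫⁻ x, ENNReal.ofReal (f x) ∂(μF.restrict (Set.Ioc a b)) ≠ ⊤ := by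
      have hb : ∫⁻ x, ENNReal.ofReal (f x) ∂(μF.restrict (Set.Ioc a b))
          ≤ ∫⁻ _, ENNReal.ofReal (f b) ∂(μF.restrict (Set.Ioc a b)) := by
        apply lintegral_mono_ae
        rw [ae_restrict_iff' measurableSet_Ioc]
        refine ae_of_all _ fun x hx => ENNReal.ofReal_le_ofReal ?_
        exact hmono (Set.Ioc_subset_Icc_self hx) hbmem hx.2
      refine ne_top_of_le_ne_top ?_ hb
      rw [lintegral_const]
      exact ENNReal.mul_ne_top ENNReal.ofReal_ne_top (measure_ne_top _ _)
    have hRHSfin : ENNReal.ofReal M * (∫⁻ x, ENNReal.ofReal (f x)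
          ∂(μF.restrict (Set.Ioc a b)))
        + ENNReal.ofReal M * μF (Set.Ioi b) * ENNReal.ofReal (f b) ≠ ⊤ := by
      apply ENNReal.add_ne_top.2
      constructor
      · exact ENNReal.mul_ne_top ENNReal.ofReal_ne_top hfinF
      · exact ENNReal.mul_ne_top
          (ENNReal.mul_ne_top ENNReal.ofReal_ne_top (measure_ne_top _ _))
          ENNReal.ofReal_ne_top
    -- convert to real integrals
    have hsmK : AEStronglyMeasurable f (μK.restrict (Set.Ioc a b)) :=
      (hcont.mono Set.Ioc_subset_Icc_self).aestronglyMeasurable measurableSet_Ioc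
    have hsmF : AEStronglyMeasurable f (μF.restrict (Set.Ioc a b)) :=
      (hcont.mono Set.Ioc_subset_Icc_self).aestronglyMeasurable measurableSet_Ioc
    have hiK := integral_eq_lintegral_of_nonneg_ae hnnK hsmK
    have hiF := integral_eq_lintegral_of_nonneg_ae hnnF hsmF
    rw [hiK, hiF]
    have := ENNReal.toReal_mono hRHSfin hmainL
    refine le_trans this (le_of_eq ?_)
    rw [ENNReal.toReal_add (ENNReal.mul_ne_top ENNReal.ofReal_ne_top hfinF)
        (ENNReal.mul_ne_top
          (ENNReal.mul_ne_top ENNReal.ofReal_ne_top (measure_ne_top _ _))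
          ENNReal.ofReal_ne_top),
      ENNReal.toReal_mul, ENNReal.toReal_mul, ENNReal.toReal_mul,
      ENNReal.toReal_ofReal hM.le, ENNReal.toReal_ofReal hfb]
    ring
  · -- Part 2
    intro hsuppF i hi _
    have haeK : 0 ≤ᵐ[μK] fun x : ℝ => x ^ i := by
      have h0 : ∀ᵐ x ∂μK, (0:ℝ) ≤ x := by
        rw [ae_iff]
        simpa [Set.Iio, not_le] using hsuppK
      filter_upwards [h0] with x hx
      exact pow_nonneg hx i
    have haeF : 0 ≤ᵐ[μF] fun x : ℝ => x ^ i := by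
      have h0 : ∀ᵐ x ∂μF, (0:ℝ) ≤ x := by
        rw [ae_iff]
        simpa [Set.Iio, not_le] using hsuppF
      filter_upwards [h0] with x hx
      exact pow_nonneg hx i
    have hmes : Measurable (fun x : ℝ => x ^ i) := measurable_id.pow_const i
    rw [lintegral_eq_lintegral_meas_lt μK haeK hmes.aemeasurable,
      lintegral_eq_lintegral_meas_lt μF haeF hmes.aemeasurable,
      ← lintegral_const_mul' (ENNReal.ofReal M) _ (ENNReal.ofReal_ne_top (r := M))]
    apply lintegral_mono_ae
    rw [ae_restrict_iff' measurableSet_Ioi]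
    refine ae_of_all _ fun t ht => ?_
    have ht' : (0:ℝ) < t := ht
    set r : ℝ := t ^ ((i:ℝ)⁻¹) with hrdef
    have hr : 0 < r := Real.rpow_pos_of_pos ht' _
    have hri : r ^ i = t := Real.rpow_inv_natCast_pow ht'.le hi.ne'
    have hsub1 : {x : ℝ | t < x ^ i} ⊆ Set.Iio 0 ∪ Set.Ioi r := by
      intro x hx
      rcases lt_or_ge x 0 with h | h
      · left; exact h
      · right
        have : r ^ i < x ^ i := by rw [hri]; exact hx
        exact lt_of_pow_lt_pow_left₀ i h this
    have hsub2 : Set.Ioi r ⊆ {x : ℝ | t < x ^ i} := by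
      intro x hx
      have : r ^ i < x ^ i := pow_lt_pow_left₀ hx hr.le hi.ne'
      rwa [hri] at this
    calc μK {x : ℝ | t < x ^ i} ≤ μK (Set.Iio 0 ∪ Set.Ioi r) := measure_mono hsub1
      _ ≤ μK (Set.Iio 0) + μK (Set.Ioi r) := measure_union_le _ _
      _ = μK (Set.Ioi r) := by rw [hsuppK, zero_add]
      _ ≤ ENNReal.ofReal M * μF (Set.Ioi r) := htail' r
      _ ≤ ENNReal.ofReal M * μF {x : ℝ | t < x ^ i} :=
          mul_le_mul_right (measure_mono hsub2) _
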